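/- The sequence b defined by b(-1)=0, b(0)=1, and b(n)=(n+2)(b(n-1)-b(n-2)) for n≥1 satisfies b(n) = (n+2) · (∑_{k=0}^{n} k!) / 2 for all n ≥ 0; equivalently, 2·b(n) = (n+2) · ∑_{k=0}^{n} k! for all n ≥ 0. -/

import Mathlib

/-- Shifted sequence: `B 0` is the paper's `b(-1) = 0`, `B 1` is `b(0) = 1`,
and `B (n+2) = (n+3) * (B (n+1) - B n)` corresponds to `b(n) = (n+2)(b(n-1) - b(n-2))`. -/
def B : ℕ → ℤ
  | 0 => 0
  | 1 => 1
  | (n + 2) => (n + 3) * (B (n + 1) - B n)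

theorem b_eq_left_factorial (n : ℕ) :
    2 * B (n + 1) = (n + 2) * ∑ k ∈ Finset.range (n + 1), (Nat.factorial k : ℤ) := by
  induction n using Nat.twoStepInduction with
  | zero => simp [B]
  | one => simp [B, Finset.sum_range_succ]
  | more n ih1 ih2 =>
    have hB : B (n + 3) = ((n : ℤ) + 4) * (B (n + 2) - B (n + 1)) := by
      show B ((n + 1) + 2) = _
      rw [B]
      push_cast
      ring
    have hfac : (Nat.factorial (n + 2) : ℤ) = ((n : ℤ) + 2) * Nat.factorial (n + 1) := by
      rw [Nat.factorial_succ]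
      push_cast
      ring
    rw [Finset.sum_range_succ] at ih2 ⊢
    rw [Finset.sum_range_succ, hB, hfac]
    push_cast at ih1 ih2 ⊢
    linear_combination ((n : ℤ) + 4) * ih2 - ((n : ℤ) + 4) * ih1
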